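/- Let p be a prime, k ≥ 1 an integer, and α > β ≥ 1 integers with p ≤ 2^α. Consider the composed MMH-MH family of functions from (ZMod p)^k to {0,…,2^β−1}, indexed by triples (a, b, c) with a ∈ (ZMod p)^k and b, c ∈ {0,…,2^α−1}, b odd, given by x ↦ ⌊((b·(g_a(x)).val + c) mod 2^α)/2^(α−β)⌋, where g_a(x) = Σ_{i=1}^k a_i·x_i in ZMod p and (·).val ∈ {0,…,p−1} is the natural-number representative. This family is (1/p + 2^(−β))-universal: for every pair of distinct x, y ∈ (ZMod p)^k, the fraction of index triples (a,b,c) producing a collision is at most 1/p + 2^(−β). -/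

import Mathlib

open Finset

def fcnt (N m D : ℕ) : ℕ := ((Finset.range N).filter (fun t => (t + D) % N / m = t / m)).card

lemma sum_filter_odd {M : Type*} [AddCommMonoid M] (K : ℕ) (g : ℕ → M) :
    ∑ w ∈ (Finset.range (2*K)).filter (fun w => Odd w), g w
      = ∑ i ∈ Finset.range K, g (2*i+1) := by
  refine Finset.sum_nbij' (fun w => w / 2) (fun i => 2*i+1) ?_ ?_ ?_ ?_ ?_
  · intro a ha
    simp only [mem_filter, mem_range] at ha
    obtain ⟨h1, c, h2⟩ := ha
    simp only [mem_range]; omega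
  · intro a ha
    simp only [mem_range] at ha
    simp only [mem_filter, mem_range]
    exact ⟨by omega, ⟨a, by omega⟩⟩
  · intro a ha
    simp only [mem_filter, mem_range] at ha
    obtain ⟨h1, c, h2⟩ := ha
    omega
  · intro a ha; omega
  · intro a ha
    simp only [mem_filter, mem_range] at ha
    obtain ⟨h1, c, h2⟩ := ha
    congr 1; omega

lemma card_filter_odd (α : ℕ) (hα : 1 ≤ α) :
    ((Finset.range (2^α)).filter (fun w => Odd w)).card = 2^(α-1) := by
  have h2 : 2^α = 2 * 2^(α-1) := by
    rw [← pow_succ']; congr 1; omega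
  calc ((Finset.range (2^α)).filter (fun w => Odd w)).card
      = ∑ w ∈ (Finset.range (2*2^(α-1))).filter (fun w => Odd w), 1 := by
        rw [← h2, Finset.card_eq_sum_ones]
    _ = ∑ i ∈ Finset.range (2^(α-1)), 1 := sum_filter_odd _ _
    _ = 2^(α-1) := by simp

lemma card_mod_lt (B m s : ℕ) (hm : 0 < m) (hs : s ≤ m) :
    ((Finset.range (B*m)).filter (fun t => t % m < s)).card = B * s := by
  have key : ((Finset.range (B*m)).filter (fun t => t % m < s)).card
      = ((Finset.range B) ×ˢ (Finset.range s)).card := by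
    apply Finset.card_nbij' (fun t => (t / m, t % m)) (fun Qr => m * Qr.1 + Qr.2)
    · intro t ht
      simp only [Finset.mem_coe, mem_filter, mem_range] at ht
      simp only [Finset.mem_coe, mem_product, mem_range]
      exact ⟨Nat.div_lt_iff_lt_mul hm |>.2 (by omega), ht.2⟩
    · intro Qr hQr
      simp only [Finset.mem_coe, mem_product, mem_range] at hQr
      simp only [Finset.mem_coe, mem_filter, mem_range]
      have h1 : (m * Qr.1 + Qr.2) % m = Qr.2 := by
        rw [Nat.mul_add_mod]; exact Nat.mod_eq_of_lt (by omega)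
      refine ⟨?_, by omega⟩
      have h3 : Qr.1 + 1 ≤ B := hQr.1
      have h4 : m * Qr.1 + m ≤ m * B := by
        have := Nat.mul_le_mul_left m h3
        rw [Nat.mul_add, Nat.mul_one] at this; exact this
      have h5 : m * B = B * m := Nat.mul_comm m B
      omega
    · intro t ht; simp only; rw [Nat.div_add_mod]
    · intro Qr hQr
      simp only [Finset.mem_coe, mem_product, mem_range] at hQr
      have h2 : Qr.2 < m := by omega
      have hd : (m * Qr.1 + Qr.2) / m = Qr.1 := by
        rw [Nat.mul_add_div hm, Nat.div_eq_of_lt h2, Nat.add_zero]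
      have hm2 : (m * Qr.1 + Qr.2) % m = Qr.2 := by
        rw [Nat.mul_add_mod, Nat.mod_eq_of_lt h2]
      simp only [hd, hm2]
  rw [key, Finset.card_product, Finset.card_range, Finset.card_range]

lemma fcnt_formula (B m D : ℕ) (hB : 2 ≤ B) (hm : 0 < m) (hD : D < B*m) :
    fcnt (B*m) m D =
      (if D / m = 0 then B * (m - D % m) else 0) +
      (if D / m = B - 1 then B * (D % m) else 0) := by
  have hcomm : B * m = m * B := Nat.mul_comm B m
  set q := D / m with hq_def
  set r := D % m with hr_def
  have hr : r < m := Nat.mod_lt _ hm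
  have hDqr : m * q + r = D := Nat.div_add_mod D m
  have hq : q < B := by
    by_contra h
    push_neg at h
    have : m * B ≤ m * q := Nat.mul_le_mul_left m h
    omega
  -- key pointwise equivalence
  have key : ∀ t ∈ Finset.range (B*m),
      ((t + D) % (B*m) / m = t / m) ↔ (if t % m + r < m then q = 0 else q = B - 1) := by
    intro t ht
    simp only [mem_range] at ht
    set Q := t / m with hQ_def
    set R := t % m with hR_def
    have hR : R < m := Nat.mod_lt _ hm
    have htQR : m * Q + R = t := Nat.div_add_mod t m
    have hQ : Q < B := by
      by_contra h
      push_neg at h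
      have : m * B ≤ m * Q := Nat.mul_le_mul_left m h
      omega
    by_cases hc : R + r < m
    · rw [if_pos hc]
      have h1 : t + D = m*(Q+q) + (R+r) := by
        rw [Nat.mul_add]; omega
      have e0 : (t + D) % (B*m) = (m*((Q+q)%B) + (R+r)) % (B*m) := by
        rw [h1, hcomm]
        have hmod : (Q+q) ≡ (Q+q) % B [MOD B] := (Nat.mod_modEq _ B).symm
        exact (Nat.ModEq.add_right (R+r) (hmod.mul_left' (c := m)))
      have hlt : m*((Q+q)%B) + (R+r) < B*m := by
        have h2 : (Q+q)%B ≤ B-1 := by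
          have := Nat.mod_lt (Q+q) (show 0 < B by omega); omega
        have h3 : m*((Q+q)%B) ≤ m*(B-1) := Nat.mul_le_mul_left m h2
        have h4 : m*(B-1) + m = m*B := by rw [← Nat.mul_succ]; congr 1; omega
        omega
      have e1 : (t + D) % (B*m) = m*((Q+q)%B) + (R+r) := by
        rw [e0, Nat.mod_eq_of_lt hlt]
      have e2 : (t + D) % (B*m) / m = (Q+q)%B := by
        rw [e1, Nat.mul_add_div hm, Nat.div_eq_of_lt hc, Nat.add_zero]
      rw [e2]
      constructor
      · intro h
        have hmq : Q + q ≡ Q + 0 [MOD B] := by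
          have : (Q+q) % B = (Q+0) % B := by
            rw [h, Nat.add_zero, Nat.mod_eq_of_lt hQ]
          exact this
        have := (Nat.ModEq.add_left_cancel' Q hmq)
        have hdvd : B ∣ q := (Nat.modEq_zero_iff_dvd).1 this
        exact Nat.eq_zero_of_dvd_of_lt hdvd hq
      · intro h; rw [h, Nat.add_zero, Nat.mod_eq_of_lt hQ]
    · rw [if_neg hc]
      have h1 : t + D = m*(Q+q+1) + (R+r-m) := by
        rw [Nat.mul_add, Nat.mul_add, Nat.mul_one]; omega
      have e0 : (t + D) % (B*m) = (m*((Q+q+1)%B) + (R+r-m)) % (B*m) := by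
        rw [h1, hcomm]
        have hmod : (Q+q+1) ≡ (Q+q+1) % B [MOD B] := (Nat.mod_modEq _ B).symm
        exact (Nat.ModEq.add_right (R+r-m) (hmod.mul_left' (c := m)))
      have hlt : m*((Q+q+1)%B) + (R+r-m) < B*m := by
        have h2 : (Q+q+1)%B ≤ B-1 := by
          have := Nat.mod_lt (Q+q+1) (show 0 < B by omega); omega
        have h3 : m*((Q+q+1)%B) ≤ m*(B-1) := Nat.mul_le_mul_left m h2
        have h4 : m*(B-1) + m = m*B := by rw [← Nat.mul_succ]; congr 1; omega
        omega
      have e1 : (t + D) % (B*m) = m*((Q+q+1)%B) + (R+r-m) := by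
        rw [e0, Nat.mod_eq_of_lt hlt]
      have e2 : (t + D) % (B*m) / m = (Q+q+1)%B := by
        rw [e1, Nat.mul_add_div hm, Nat.div_eq_of_lt (show R+r-m < m by omega), Nat.add_zero]
      rw [e2]
      constructor
      · intro h
        have hmq : Q + (q+1) ≡ Q + 0 [MOD B] := by
          have : (Q+(q+1)) % B = (Q+0) % B := by
            rw [← Nat.add_assoc, h, Nat.add_zero, Nat.mod_eq_of_lt hQ]
          exact this
        have := (Nat.ModEq.add_left_cancel' Q hmq)
        have hdvd : B ∣ (q+1) := (Nat.modEq_zero_iff_dvd).1 this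
        have h5 : B ≤ q + 1 := Nat.le_of_dvd (Nat.succ_pos q) hdvd
        omega
      · intro h
        have : Q + q + 1 = Q + B := by omega
        rw [this, Nat.add_mod_right, Nat.mod_eq_of_lt hQ]
  unfold fcnt
  rw [Finset.filter_congr key]
  by_cases hq0 : q = 0
  · rw [if_pos hq0, if_neg (by omega)]
    have : ∀ t ∈ Finset.range (B*m),
        ((if t % m + r < m then q = 0 else q = B - 1)) ↔ (t % m < m - r) := by
      intro t ht
      by_cases hc : t % m + r < m
      · simp [hc, hq0]; omega
      · simp [hc]; omega
    rw [Finset.filter_congr this, card_mod_lt B m (m-r) hm (by omega)]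
    omega
  · by_cases hq1 : q = B - 1
    · rw [if_neg hq0, if_pos hq1]
      have : ∀ t ∈ Finset.range (B*m),
          ((if t % m + r < m then q = 0 else q = B - 1)) ↔ ¬(t % m < m - r) := by
        intro t ht
        by_cases hc : t % m + r < m
        · simp [hc]; omega
        · simp [hc, hq1]; omega
      rw [Finset.filter_congr this]
      have hsplit := Finset.card_filter_add_card_filter_not
        (s := Finset.range (B*m)) (p := fun t => t % m < m - r)
      rw [card_mod_lt B m (m-r) hm (by omega), Finset.card_range] at hsplit
      have hBm : B*(m-r) + B*r = B*m := by rw [← Nat.mul_add]; congr 1; omega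
      omega
    · rw [if_neg hq0, if_neg hq1]
      have : ∀ t ∈ Finset.range (B*m),
          ((if t % m + r < m then q = 0 else q = B - 1)) ↔ False := by
        intro t ht
        by_cases hc : t % m + r < m
        · simp [hc]; omega
        · simp [hc]; omega
      rw [Finset.filter_congr this]
      simp

lemma cnt_eq (N m b u v : ℕ) (hN : 0 < N) (hv : v < N) :
    ((Finset.range N).filter (fun c => (b*u+c) % N / m = (b*v+c) % N / m)).card
      = fcnt N m ((b * ((u + (N - v)) % N)) % N) := by
  set Δ := (u + (N - v)) % N with hΔ_def
  set D := (b * Δ) % N with hD_def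
  set s := (b*v) % N with hs_def
  have hs : s < N := Nat.mod_lt _ hN
  -- fact1
  have fact1 : ∀ c : ℕ, ((b*v+c) % N + D) % N = (b*u+c) % N := by
    intro c
    have h1 : (b*v+c) % N + D ≡ (b*v+c) + b*Δ [MOD N] :=
      Nat.ModEq.add (Nat.mod_modEq _ N) (Nat.mod_modEq _ N)
    have h2 : (b*v+c) + b*Δ ≡ (b*v+c) + b*(u + (N - v)) [MOD N] :=
      Nat.ModEq.add_left _ (Nat.ModEq.mul_left b (Nat.mod_modEq _ N))
    have h3 : b*v + b*(N-v) = b*N := by rw [← Nat.mul_add]; congr 1; omega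
    have h4 : (b*v+c) + b*(u + (N-v)) = (b*u+c) + b*N := by
      rw [Nat.mul_add]; omega
    have h5 : ((b*u+c) + b*N) % N = (b*u+c) % N := Nat.add_mul_mod_self_right _ _ _
    calc ((b*v+c) % N + D) % N = ((b*v+c) + b*Δ) % N := h1
      _ = ((b*v+c) + b*(u + (N-v))) % N := h2
      _ = ((b*u+c) + b*N) % N := by rw [h4]
      _ = (b*u+c) % N := h5
  -- fact2 : right inverse composed forward
  have fact2 : ∀ t, t < N → (b*v + ((t + (N - s)) % N)) % N = t := by
    intro t ht
    have h1 : b*v + ((t + (N - s)) % N) ≡ b*v + (t + (N - s)) [MOD N] :=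
      Nat.ModEq.add_left _ (Nat.mod_modEq _ N)
    have h2 : b*v + (t + (N - s)) ≡ s + (t + (N - s)) [MOD N] :=
      Nat.ModEq.add_right _ ((Nat.mod_modEq (b*v) N).symm)
    have h3 : s + (t + (N - s)) = t + N := by omega
    calc (b*v + ((t + (N - s)) % N)) % N = (b*v + (t + (N-s))) % N := h1
      _ = (s + (t + (N-s))) % N := h2
      _ = (t + N) % N := by rw [h3]
      _ = t % N := Nat.add_mod_right t N
      _ = t := Nat.mod_eq_of_lt ht
  -- fact3 : left inverse
  have fact3 : ∀ c, c < N → ((b*v+c) % N + (N - s)) % N = c := by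
    intro c hc
    have h1 : (b*v+c) % N + (N - s) ≡ (b*v+c) + (N - s) [MOD N] :=
      Nat.ModEq.add_right _ (Nat.mod_modEq _ N)
    have h2 : (b*v+c) + (N - s) ≡ (s+c) + (N - s) [MOD N] :=
      Nat.ModEq.add_right _ (Nat.ModEq.add_right _ ((Nat.mod_modEq (b*v) N).symm))
    have h3 : (s+c) + (N - s) = c + N := by omega
    calc ((b*v+c) % N + (N - s)) % N = ((b*v+c) + (N-s)) % N := h1
      _ = ((s+c) + (N-s)) % N := h2
      _ = (c + N) % N := by rw [h3]
      _ = c % N := Nat.add_mod_right c N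
      _ = c := Nat.mod_eq_of_lt hc
  unfold fcnt
  apply Finset.card_nbij' (fun c => (b*v+c) % N) (fun t => (t + (N - s)) % N)
  · intro c hc
    simp only [Finset.mem_coe, mem_filter, mem_range] at hc ⊢
    refine ⟨Nat.mod_lt _ hN, ?_⟩
    rw [fact1 c, hc.2]
  · intro t ht
    simp only [Finset.mem_coe, mem_filter, mem_range] at ht ⊢
    refine ⟨Nat.mod_lt _ hN, ?_⟩
    set c := (t + (N - s)) % N with hc_def
    have h := fact1 c
    rw [fact2 t ht.1] at h ⊢
    rw [← h, ht.2]
  · intro c hc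
    simp only [Finset.mem_coe, mem_filter, mem_range] at hc
    exact fact3 c hc.1
  · intro t ht
    simp only [Finset.mem_coe, mem_filter, mem_range] at ht
    exact fact2 t ht.1

lemma sum_range_mod (K M : ℕ) (H : ℕ → ℕ) :
    ∑ i ∈ Finset.range (K*M), H (i % M) = K * ∑ s ∈ Finset.range M, H s := by
  induction K with
  | zero => simp
  | succ n ih =>
    have h1 : (n+1)*M = n*M + M := by ring
    rw [h1, Finset.sum_range_add, ih]
    have h2 : ∀ i ∈ Finset.range M, H ((n*M + i) % M) = H (i % M) := by
      intro i _
      congr 1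
      rw [Nat.add_comm, Nat.mul_comm n M, Nat.add_mul_mod_self_left]
    rw [Finset.sum_congr rfl h2]
    have h3 : ∀ i ∈ Finset.range M, H (i % M) = H i := by
      intro i hi
      simp only [mem_range] at hi
      rw [Nat.mod_eq_of_lt hi]
    rw [Finset.sum_congr rfl h3]
    ring

lemma sum_odd_mod (j e : ℕ) (he : 1 ≤ e) (h : ℕ → ℕ) :
    ∑ b ∈ (Finset.range (2^(j+e))).filter (fun b => Odd b), h (b % 2^e)
      = 2^j * ∑ x ∈ (Finset.range (2^e)).filter (fun x => Odd x), h x := by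
  have hje : 2^(j+e) = 2*(2^j * 2^(e-1)) := by
    rw [← pow_add, ← pow_succ']; congr 1; omega
  have he2 : 2^e = 2*2^(e-1) := by rw [← pow_succ']; congr 1; omega
  rw [hje, sum_filter_odd, he2, sum_filter_odd]
  set M := 2^(e-1) with hM_def
  have hM : 0 < M := Nat.pow_pos (by norm_num)
  have key : ∀ i : ℕ, (2*i+1) % (2*M) = 2*(i % M)+1 := by
    intro i
    have hdm := Nat.div_add_mod i M
    have h2 : 2*i+1 = (2*(i % M)+1) + (i/M)*(2*M) := by
      have : (i/M)*(2*M) = 2*(M*(i/M)) := by ring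
      omega
    rw [h2, Nat.add_mul_mod_self_right, Nat.mod_eq_of_lt]
    have := Nat.mod_lt i hM
    omega
  have h4 : ∀ i ∈ Finset.range (2^j * M), h ((2*i+1) % (2*M)) = h (2*(i % M)+1) := by
    intro i _; rw [key]
  rw [Finset.sum_congr rfl h4, sum_range_mod (2^j) M (fun s => h (2*s+1))]

lemma sum_mul_odd (e w0 : ℕ) (he : 1 ≤ e) (hw0 : Odd w0) (g : ℕ → ℕ) :
    ∑ x ∈ (Finset.range (2^e)).filter (fun x => Odd x), g ((x * w0) % 2^e)
      = ∑ w ∈ (Finset.range (2^e)).filter (fun w => Odd w), g w := by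
  have hcop : Nat.Coprime w0 (2^e) :=
    Nat.Coprime.pow_right e ((Nat.coprime_two_left.mpr hw0).symm)
  have h2e : 0 < 2^e := Nat.pow_pos (by norm_num)
  have hinj : ∀ x ∈ (Finset.range (2^e)).filter (fun x => Odd x),
      ∀ y ∈ (Finset.range (2^e)).filter (fun y => Odd y),
      (x * w0) % 2^e = (y * w0) % 2^e → x = y := by
    intro x hx y hy hxy
    simp only [mem_filter, mem_range] at hx hy
    have hmod : x * w0 ≡ y * w0 [MOD 2^e] := hxy
    have := Nat.ModEq.cancel_right_of_coprime hcop.symm hmod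
    have hx' := Nat.mod_eq_of_lt hx.1
    have hy' := Nat.mod_eq_of_lt hy.1
    unfold Nat.ModEq at this
    omega
  have himg : ((Finset.range (2^e)).filter (fun x => Odd x)).image (fun x => (x*w0) % 2^e)
      = (Finset.range (2^e)).filter (fun w => Odd w) := by
    apply Finset.eq_of_subset_of_card_le
    · intro w hw
      simp only [Finset.mem_image, mem_filter, mem_range] at hw ⊢
      obtain ⟨x, ⟨hx1, hx2⟩, hw⟩ := hw
      refine ⟨by omega, ?_⟩
      subst hw
      have h2 : (2:ℕ) ∣ 2^e := dvd_pow_self 2 (by omega)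
      rw [Nat.odd_iff, Nat.mod_mod_of_dvd _ h2, ← Nat.odd_iff]
      exact hx2.mul hw0
    · rw [Finset.card_image_of_injOn hinj]
  calc ∑ x ∈ (Finset.range (2^e)).filter (fun x => Odd x), g ((x * w0) % 2^e)
      = ∑ w ∈ ((Finset.range (2^e)).filter (fun x => Odd x)).image (fun x => (x*w0) % 2^e), g w :=
        (Finset.sum_image hinj).symm
    _ = ∑ w ∈ (Finset.range (2^e)).filter (fun w => Odd w), g w := by rw [himg]

lemma sum_odds_eq (K : ℕ) : ∑ i ∈ Finset.range K, (2*i+1) = K*K := by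
  induction K with
  | zero => simp
  | succ n ih => rw [Finset.sum_range_succ, ih]; ring

lemma sumC (α β j : ℕ) (hβ : 1 ≤ β) (hβα : β < α) (hj : j < α) :
    ∑ w ∈ (Finset.range (2^(α-j))).filter (fun w => Odd w), fcnt (2^α) (2^(α-β)) (2^j * w)
      ≤ 2^(2*α-1-β-j) := by
  set B := 2^β with hB_def
  set m := 2^(α-β) with hm_def
  have hB : 2 ≤ B := by
    calc 2 = 2^1 := (pow_one 2).symm
    _ ≤ 2^β := Nat.pow_le_pow_right (by norm_num) hβ
  have hm : 0 < m := Nat.pow_pos (by norm_num)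
  have hBm : 2^α = B * m := by rw [hB_def, hm_def, ← pow_add]; congr 1; omega
  have hDlt : ∀ w ∈ (Finset.range (2^(α-j))).filter (fun w => Odd w), 2^j * w < 2^α := by
    intro w hw
    simp only [mem_filter, mem_range] at hw
    calc 2^j * w < 2^j * 2^(α-j) := by
          exact (Nat.mul_lt_mul_left (Nat.pow_pos (n := j) (by norm_num))).mpr hw.1
      _ = 2^α := by rw [← pow_add]; congr 1; omega
  have hform : ∀ w ∈ (Finset.range (2^(α-j))).filter (fun w => Odd w),
      fcnt (2^α) m (2^j * w) =
        (if (2^j*w) / m = 0 then B * (m - (2^j*w) % m) else 0) +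
        (if (2^j*w) / m = B - 1 then B * ((2^j*w) % m) else 0) := by
    intro w hw
    rw [hBm]
    exact fcnt_formula B m (2^j*w) hB hm (hBm ▸ hDlt w hw)
  rw [Finset.sum_congr rfl hform]
  by_cases hcase : α - β ≤ j
  · -- all terms are zero
    have hzero : ∀ w ∈ (Finset.range (2^(α-j))).filter (fun w => Odd w),
        ((if (2^j*w) / m = 0 then B * (m - (2^j*w) % m) else 0) +
        (if (2^j*w) / m = B - 1 then B * ((2^j*w) % m) else 0)) = 0 := by
      intro w hw
      simp only [mem_filter, mem_range] at hw
      have hw1 : 1 ≤ w := hw.2.pos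
      have hdvd : m ∣ 2^j * w := Dvd.dvd.mul_right (pow_dvd_pow 2 hcase) w
      have hr : (2^j*w) % m = 0 := Nat.mod_eq_zero_of_dvd hdvd
      have hq0 : (2^j*w)/m ≠ 0 := by
        intro h0
        have hlt := (Nat.div_eq_zero_iff_lt hm).1 h0
        have hmle : m ≤ 2^j := by
          rw [hm_def]; exact Nat.pow_le_pow_right (by norm_num) hcase
        have : 2^j * 1 ≤ 2^j*w := Nat.mul_le_mul_left _ hw1
        omega
      rw [hr]
      simp [hq0]
    rw [Finset.sum_congr rfl hzero]
    simp
  · push_neg at hcase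
    set e' := α - β - j with he'_def
    have he' : 1 ≤ e' := by omega
    set M := 2^e' with hM_def
    set K := 2^(e'-1) with hK_def
    have hMK : M = 2*K := by rw [hM_def, hK_def, ← pow_succ']; congr 1; omega
    have hM0 : 0 < M := Nat.pow_pos (by norm_num)
    have hK0 : 0 < K := Nat.pow_pos (by norm_num)
    have hmjM : m = 2^j * M := by rw [hm_def, hM_def, ← pow_add]; congr 1; omega
    have hαjBM : 2^(α-j) = B * M := by rw [hB_def, hM_def, ← pow_add]; congr 1; omega
    have h2j : 0 < 2^j := Nat.pow_pos (by norm_num)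
    -- rewrite q and r
    have hqr : ∀ w : ℕ, (2^j*w) / m = w / M ∧ (2^j*w) % m = 2^j * (w % M) := by
      intro w
      constructor
      · rw [hmjM, Nat.mul_div_mul_left _ _ h2j]
      · rw [hmjM, Nat.mul_mod_mul_left]
    have hsimp : ∀ w ∈ (Finset.range (2^(α-j))).filter (fun w => Odd w),
        ((if (2^j*w) / m = 0 then B * (m - (2^j*w) % m) else 0) +
        (if (2^j*w) / m = B - 1 then B * ((2^j*w) % m) else 0)) =
        ((if w / M = 0 then B * (2^j * (M - w % M)) else 0) +
        (if w / M = B - 1 then B * (2^j * (w % M)) else 0)) := by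
      intro w _
      rw [(hqr w).1, (hqr w).2, hmjM, ← Nat.mul_sub]
    rw [Finset.sum_congr rfl hsimp, Finset.sum_add_distrib]
    -- first sum
    have hfilter1 : (Finset.range (2^(α-j))).filter (fun w => Odd w ∧ w / M = 0)
        = (Finset.range M).filter (fun w => Odd w) := by
      ext w
      simp only [mem_filter, mem_range]
      have hiff : w / M = 0 ↔ w < M := Nat.div_eq_zero_iff_lt hM0
      have hMle : M ≤ 2^(α-j) := by
        rw [hαjBM]; exact Nat.le_mul_of_pos_left M (by omega)
      constructor
      · rintro ⟨h1, h2, h3⟩; exact ⟨hiff.1 h3, h2⟩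
      · rintro ⟨h1, h2⟩; exact ⟨by omega, h2, hiff.2 h1⟩
    have hsum1 : ∑ w ∈ (Finset.range (2^(α-j))).filter (fun w => Odd w),
        (if w / M = 0 then B * (2^j * (M - w % M)) else 0) = B * (2^j * (K*K)) := by
      rw [← Finset.sum_filter, Finset.filter_filter, hfilter1]
      have hval : ∀ w ∈ (Finset.range M).filter (fun w => Odd w),
          B * (2^j * (M - w % M)) = B * (2^j * (M - w)) := by
        intro w hw
        simp only [mem_filter, mem_range] at hw
        rw [Nat.mod_eq_of_lt hw.1]
      rw [Finset.sum_congr rfl hval, hMK, sum_filter_odd K (fun w => B * (2^j * (2*K - w)))]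
      have hterm : ∀ i ∈ Finset.range K,
          B * (2^j * (2*K - (2*i+1))) = B * (2^j * (2*(K-1-i)+1)) := by
        intro i hi
        simp only [mem_range] at hi
        congr 2
        omega
      rw [Finset.sum_congr rfl hterm]
      rw [Finset.sum_range_reflect (fun i => B * (2^j * (2*i+1))) K]
      have hpull : ∀ i ∈ Finset.range K, B * (2^j * (2*i+1)) = (B*2^j)*(2*i+1) := by
        intro i _; ring
      rw [Finset.sum_congr rfl hpull, ← Finset.mul_sum, sum_odds_eq]
      ring
    -- second sum
    have hMeven : (2:ℕ) ∣ M := by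
      rw [hM_def]; exact dvd_pow_self 2 (by omega)
    have hfilter2 : (Finset.range (2^(α-j))).filter (fun w => Odd w ∧ w / M = B - 1)
        = ((Finset.range M).filter (fun w => Odd w)).image (fun u => M*(B-1) + u) := by
      ext w
      simp only [mem_filter, mem_range, Finset.mem_image]
      have hdvd2 : (2:ℕ) ∣ M*(B-1) := hMeven.mul_right _
      constructor
      · rintro ⟨h1, h2, h3⟩
        refine ⟨w % M, ⟨Nat.mod_lt _ hM0, ?_⟩, ?_⟩
        · have heq := Nat.div_add_mod w M
          rw [h3] at heq
          rw [Nat.odd_iff] at h2 ⊢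
          omega
        · have heq := Nat.div_add_mod w M
          rw [h3] at heq
          exact heq
      · rintro ⟨u, ⟨hu1, hu2⟩, hw⟩
        have hBM' : M*(B-1)+M = M*B := by rw [← Nat.mul_succ]; congr 1; omega
        have hcomm : M*B = B*M := Nat.mul_comm M B
        refine ⟨?_, ?_, ?_⟩
        · rw [hαjBM]; omega
        · rw [Nat.odd_iff] at hu2 ⊢; omega
        · rw [← hw, Nat.mul_add_div hM0, Nat.div_eq_of_lt hu1, Nat.add_zero]
    have hsum2 : ∑ w ∈ (Finset.range (2^(α-j))).filter (fun w => Odd w),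
        (if w / M = B - 1 then B * (2^j * (w % M)) else 0) = B * (2^j * (K*K)) := by
      rw [← Finset.sum_filter, Finset.filter_filter, hfilter2]
      rw [Finset.sum_image (by intro a _ b _ h; simp only at h; omega)]
      have hval : ∀ u ∈ (Finset.range M).filter (fun w => Odd w),
          B * (2^j * ((M*(B-1) + u) % M)) = (B*2^j) * u := by
        intro u hu
        simp only [mem_filter, mem_range] at hu
        rw [Nat.mul_add_mod, Nat.mod_eq_of_lt hu.1]
        ring
      rw [Finset.sum_congr rfl hval, ← Finset.mul_sum, hMK, sum_filter_odd K (fun u => u),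
        sum_odds_eq]
      ring
    rw [hsum1, hsum2]
    apply le_of_eq
    rw [hB_def, hK_def]
    rw [show 2*α-1-β-j = 1+(β+(j+((e'-1)+(e'-1)))) from by omega]
    rw [pow_add, pow_add, pow_add, pow_add, pow_one]
    ring

lemma mh_sum (α β : ℕ) (hβ : 1 ≤ β) (hβα : β < α) (Δ : ℕ) (hΔ0 : Δ ≠ 0) (hΔ : Δ < 2^α) :
    ∑ b ∈ (Finset.range (2^α)).filter (fun b => Odd b), fcnt (2^α) (2^(α-β)) ((b * Δ) % 2^α)
      ≤ 2^(2*α-1-β) := by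
  obtain ⟨j, w0, hw0nd, hΔeq⟩ := Nat.exists_eq_pow_mul_and_not_dvd hΔ0 2 (by norm_num)
  have hw0 : Odd w0 := Nat.odd_iff.mpr (by omega)
  have hw01 : 1 ≤ w0 := hw0.pos
  have hj : j < α := by
    by_contra h
    push_neg at h
    have h1 : 2^α ≤ 2^j := Nat.pow_le_pow_right (by norm_num) h
    have h2 : 2^j * 1 ≤ 2^j * w0 := Nat.mul_le_mul_left _ hw01
    omega
  set e := α - j with he_def
  have he : 1 ≤ e := by omega
  have heα : j + e = α := by omega
  have hrw : ∀ b, (b * Δ) % 2^α = 2^j * ((b % 2^e * w0) % 2^e) := by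
    intro b
    rw [Nat.mod_mul_mod]
    rw [hΔeq, ← heα, pow_add]
    rw [show b * (2^j * w0) = 2^j * (b * w0) from by ring]
    exact Nat.mul_mod_mul_left _ _ _
  calc ∑ b ∈ (Finset.range (2^α)).filter (fun b => Odd b), fcnt (2^α) (2^(α-β)) ((b * Δ) % 2^α)
      = ∑ b ∈ (Finset.range (2^(j+e))).filter (fun b => Odd b),
          (fun x => fcnt (2^α) (2^(α-β)) (2^j * ((x * w0) % 2^e))) (b % 2^e) := by
        rw [heα]
        exact Finset.sum_congr rfl (fun b _ => by rw [hrw b])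
    _ = 2^j * ∑ x ∈ (Finset.range (2^e)).filter (fun x => Odd x),
          fcnt (2^α) (2^(α-β)) (2^j * ((x * w0) % 2^e)) :=
        by exact sum_odd_mod j e he (fun x => fcnt (2^α) (2^(α-β)) ((2^j * ((x * w0) % 2^e))))
    _ = 2^j * ∑ w ∈ (Finset.range (2^e)).filter (fun w => Odd w),
          fcnt (2^α) (2^(α-β)) (2^j * w) := by
        rw [sum_mul_odd e w0 he hw0 (fun w => fcnt (2^α) (2^(α-β)) (2^j * w))]
    _ ≤ 2^j * 2^(2*α-1-β-j) := by
        apply Nat.mul_le_mul_left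
        exact sumC α β j hβ hβα hj
    _ = 2^(2*α-1-β) := by
        rw [← pow_add]; congr 1; omega

lemma mh_main (α β : ℕ) (hβ : 1 ≤ β) (hβα : β < α) (u v : ℕ)
    (hu : u < 2^α) (hv : v < 2^α) (huv : u ≠ v) :
    ((Finset.range (2^α) ×ˢ Finset.range (2^α)).filter
      (fun bc : ℕ × ℕ => Odd bc.1 ∧
        (bc.1*u+bc.2) % 2^α / 2^(α-β) = (bc.1*v+bc.2) % 2^α / 2^(α-β))).card
      ≤ 2^(2*α-1-β) := by
  have hN : 0 < 2^α := Nat.pow_pos (by norm_num)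
  rw [Finset.card_filter, Finset.sum_product]
  have hub : ∀ b ∈ Finset.range (2^α),
      (∑ c ∈ Finset.range (2^α), if Odd b ∧
          ((b*u+c) % 2^α / 2^(α-β) = (b*v+c) % 2^α / 2^(α-β)) then 1 else 0)
      = if Odd b then fcnt (2^α) (2^(α-β)) ((b * ((u + (2^α - v)) % 2^α)) % 2^α) else 0 := by
    intro b _
    by_cases hb : Odd b
    · simp only [hb, true_and, if_true]
      rw [← Finset.card_filter]
      exact cnt_eq (2^α) (2^(α-β)) b u v hN hv
    · simp [hb]
  rw [Finset.sum_congr rfl hub, ← Finset.sum_filter]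
  apply mh_sum α β hβ hβα
  · -- Δ ≠ 0
    intro h0
    have h1 : (u + (2^α - v)) ≡ 0 [MOD 2^α] := by
      show (u + (2^α - v)) % 2^α = 0 % 2^α
      simp [h0]
    have h2 := h1.add_right v
    have h3 : u + (2^α - v) + v = u + 2^α := by omega
    rw [h3] at h2
    have h4 : (u + 2^α) % 2^α = (0 + v) % 2^α := h2
    rw [Nat.add_mod_right, Nat.zero_add, Nat.mod_eq_of_lt hu, Nat.mod_eq_of_lt hv] at h4
    exact huv h4
  · exact Nat.mod_lt _ hN

lemma mmh_count (p k : ℕ) [Fact p.Prime] (hk : 1 ≤ k) (z : Fin k → ZMod p) (hz : z ≠ 0) :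
    (Finset.univ.filter (fun a : Fin k → ZMod p => ∑ i, a i * z i = 0)).card = p^(k-1) := by
  obtain ⟨i0, hi0⟩ : ∃ i, z i ≠ 0 := by
    by_contra h; push_neg at h; exact hz (funext h)
  have hsplit : ∀ f : Fin k → ZMod p,
      ∑ i, f i = f i0 + ∑ j : {j : Fin k // j ≠ i0}, f j.1 := by
    intro f
    rw [← Finset.add_sum_erase Finset.univ f (Finset.mem_univ i0)]
    congr 1
    exact Finset.sum_subtype (p := fun j => j ≠ i0) (Finset.univ.erase i0)
      (by intro x; simp [Finset.mem_erase]) f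
  have hbij : (Finset.univ.filter (fun a : Fin k → ZMod p => ∑ i, a i * z i = 0)).card
      = (Finset.univ : Finset ({j : Fin k // j ≠ i0} → ZMod p)).card := by
    apply Finset.card_nbij' (fun a => fun j : {j : Fin k // j ≠ i0} => a j.1)
      (fun g => fun i => if h : i = i0
        then (- ∑ j : {j : Fin k // j ≠ i0}, g j * z j.1) * (z i0)⁻¹ else g ⟨i, h⟩)
    · intro a _; exact Finset.mem_univ _
    · intro g _
      simp only [Finset.mem_coe, Finset.mem_filter, Finset.mem_univ, true_and]
      rw [hsplit]
      have hrest : ∀ j : {j : Fin k // j ≠ i0},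
          (if h : j.1 = i0 then (- ∑ j' : {j' : Fin k // j' ≠ i0}, g j' * z j'.1) * (z i0)⁻¹
            else g ⟨j.1, h⟩) * z j.1 = g j * z j.1 := by
        intro j
        rw [dif_neg j.2]
      rw [Finset.sum_congr rfl (fun j _ => hrest j), dif_pos rfl]
      rw [mul_assoc, inv_mul_cancel₀ hi0, mul_one]
      ring
    · intro a ha
      simp only [Finset.mem_coe, Finset.mem_filter, Finset.mem_univ, true_and] at ha
      funext i; dsimp only
      by_cases h : i = i0
      · rw [dif_pos h]
        rw [hsplit] at ha
        have hneg : ∑ j : {j : Fin k // j ≠ i0}, a j.1 * z j.1 = - (a i0 * z i0) :=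
          eq_neg_of_add_eq_zero_right ha
        rw [hneg, neg_neg, mul_assoc, mul_inv_cancel₀ hi0, mul_one, h]
      · rw [dif_neg h]
    · intro g _
      funext j
      simp only [dif_neg j.2]
  rw [hbij, Finset.card_univ, Fintype.card_pi, Finset.prod_const, Finset.card_univ]
  have hzp : Fintype.card (ZMod p) = p := ZMod.card p
  have hsub : Fintype.card {j : Fin k // j ≠ i0} = k - 1 := by
    have := Set.card_ne_eq i0
    simpa using this
  rw [hzp, hsub]

lemma final_eq (p k α β : ℕ) (hp0 : 0 < p) (hk : 1 ≤ k) (hβ : 1 ≤ β) (hβα : β < α) :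
    (1 / (p : ℝ) + (2 : ℝ) ^ (-(β : ℤ))) * ((p : ℝ) ^ k * 2 ^ (2 * α - 1))
      = (p:ℝ)^(k-1) * 2^(2*α-1) + (p:ℝ)^k * 2^(2*α-1-β) := by
  have hp0' : (p:ℝ) ≠ 0 := Nat.cast_ne_zero.mpr hp0.ne'
  have e1 : (p:ℝ)^k = (p:ℝ)^(k-1) * p := by rw [← pow_succ]; congr 1; omega
  have e2 : (2:ℝ)^(2*α-1) = 2^(2*α-1-β) * 2^β := by rw [← pow_add]; congr 1; omega
  have e3 : (2:ℝ)^(-(β:ℤ)) = ((2:ℝ)^β)⁻¹ := by rw [zpow_neg, zpow_natCast]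
  have h2β : ((2:ℝ)^β) ≠ 0 := by positivity
  rw [e3, e1]
  nth_rewrite 2 [e2]
  field_simp
  rw [e2]
  ring

/-- The composed MMH-MH family is `(1/p + 2^(−β))`-universal: for a prime
`p ≤ 2^α`, `k ≥ 1` and `α > β ≥ 1`, for any two distinct inputs
`x y : Fin k → ZMod p`, the number of index triples `(a, b, c)` (with
`a ∈ (ZMod p)^k`, `b, c ∈ {0, …, 2^α − 1}`, `b` odd) such that
`⌊((b·(gₐ x).val + c) mod 2^α)/2^(α−β)⌋ = ⌊((b·(gₐ y).val + c) mod 2^α)/2^(α−β)⌋`,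
where `gₐ x = ∑ i, a i * x i`, is at most `(1/p + 2^(−β))` times the size
`p^k · 2^(2α−1)` of the index set. -/
theorem mmh_mh_universal (p k α β : ℕ) [Fact p.Prime] (hk : 1 ≤ k)
    (hβ : 1 ≤ β) (hβα : β < α) (hpα : p ≤ 2 ^ α)
    (x y : Fin k → ZMod p) (hxy : x ≠ y) :
    ((((Finset.univ : Finset (Fin k → ZMod p)) ×ˢ
        ((Finset.range (2 ^ α) ×ˢ Finset.range (2 ^ α)).filter
          (fun bc : ℕ × ℕ => Odd bc.1))).filter
        (fun abc : (Fin k → ZMod p) × (ℕ × ℕ) =>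
          (abc.2.1 * (∑ i, abc.1 i * x i).val + abc.2.2) % 2 ^ α / 2 ^ (α - β)
            = (abc.2.1 * (∑ i, abc.1 i * y i).val + abc.2.2) % 2 ^ α
                / 2 ^ (α - β))).card : ℝ)
      ≤ (1 / (p : ℝ) + (2 : ℝ) ^ (-(β : ℤ))) *
          ((p : ℝ) ^ k * 2 ^ (2 * α - 1)) := by
  have hp : p.Prime := Fact.out
  have hp0 : 0 < p := hp.pos
  haveI : NeZero p := ⟨hp0.ne'⟩
  set B := ((Finset.range (2 ^ α) ×ˢ Finset.range (2 ^ α)).filter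
    (fun bc : ℕ × ℕ => Odd bc.1)) with hB_def
  -- card of B
  have hBcard : B.card = 2^(2*α-1) := by
    rw [hB_def, Finset.card_filter, Finset.sum_product]
    have h1 : ∀ b ∈ Finset.range (2^α),
        (∑ _c ∈ Finset.range (2^α), if Odd b then (1:ℕ) else 0)
          = if Odd b then 2^α else 0 := by
      intro b _
      by_cases hb : Odd b <;> simp [hb]
    rw [Finset.sum_congr rfl h1, ← Finset.sum_filter, Finset.sum_const, smul_eq_mul,
      card_filter_odd α (by omega), ← pow_add]
    congr 1
    omega
  -- main ℕ-level bound
  have hq : ∀ a : Fin k → ZMod p,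
      ((∑ i, a i * x i) = (∑ i, a i * y i)) ↔ (∑ i, a i * (x - y) i = 0) := by
    intro a
    have : ∑ i, a i * (x - y) i = (∑ i, a i * x i) - (∑ i, a i * y i) := by
      rw [← Finset.sum_sub_distrib]
      exact Finset.sum_congr rfl (fun i _ => by simp [Pi.sub_apply, mul_sub])
    rw [this, sub_eq_zero]
  have hnat : ((Finset.univ ×ˢ B).filter
        (fun abc : (Fin k → ZMod p) × (ℕ × ℕ) =>
          (abc.2.1 * (∑ i, abc.1 i * x i).val + abc.2.2) % 2 ^ α / 2 ^ (α - β)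
            = (abc.2.1 * (∑ i, abc.1 i * y i).val + abc.2.2) % 2 ^ α
                / 2 ^ (α - β))).card
      ≤ p^(k-1) * 2^(2*α-1) + p^k * 2^(2*α-1-β) := by
    rw [Finset.card_filter, Finset.sum_product]
    have hinner : ∀ a : Fin k → ZMod p,
        (∑ bc ∈ B, if (bc.1 * (∑ i, a i * x i).val + bc.2) % 2 ^ α / 2 ^ (α - β)
            = (bc.1 * (∑ i, a i * y i).val + bc.2) % 2 ^ α / 2 ^ (α - β) then (1:ℕ) else 0)
          = (B.filter (fun bc => (bc.1 * (∑ i, a i * x i).val + bc.2) % 2 ^ α / 2 ^ (α - β)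
            = (bc.1 * (∑ i, a i * y i).val + bc.2) % 2 ^ α / 2 ^ (α - β))).card := by
      intro a
      rw [Finset.card_filter]
    rw [Finset.sum_congr rfl (fun a _ => hinner a)]
    rw [← Finset.sum_filter_add_sum_filter_not Finset.univ
      (fun a : Fin k → ZMod p => (∑ i, a i * x i) = (∑ i, a i * y i))]
    have hbound1 : ∑ a ∈ Finset.univ.filter
          (fun a : Fin k → ZMod p => (∑ i, a i * x i) = (∑ i, a i * y i)),
        (B.filter (fun bc => (bc.1 * (∑ i, a i * x i).val + bc.2) % 2 ^ α / 2 ^ (α - β)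
            = (bc.1 * (∑ i, a i * y i).val + bc.2) % 2 ^ α / 2 ^ (α - β))).card
        ≤ p^(k-1) * 2^(2*α-1) := by
      calc _ ≤ ∑ a ∈ Finset.univ.filter
            (fun a : Fin k → ZMod p => (∑ i, a i * x i) = (∑ i, a i * y i)), B.card := by
            apply Finset.sum_le_sum
            intro a _
            exact Finset.card_le_card (Finset.filter_subset _ _)
        _ = p^(k-1) * 2^(2*α-1) := by
            rw [Finset.sum_const, smul_eq_mul, hBcard]
            congr 1
            rw [Finset.filter_congr (fun a _ => hq a)]
            exact mmh_count p k hk (x - y) (sub_ne_zero.mpr hxy)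
    have hbound2 : ∑ a ∈ Finset.univ.filter
          (fun a : Fin k → ZMod p => ¬((∑ i, a i * x i) = (∑ i, a i * y i))),
        (B.filter (fun bc => (bc.1 * (∑ i, a i * x i).val + bc.2) % 2 ^ α / 2 ^ (α - β)
            = (bc.1 * (∑ i, a i * y i).val + bc.2) % 2 ^ α / 2 ^ (α - β))).card
        ≤ p^k * 2^(2*α-1-β) := by
      calc _ ≤ ∑ _a ∈ Finset.univ.filter
            (fun a : Fin k → ZMod p => ¬((∑ i, a i * x i) = (∑ i, a i * y i))),
            2^(2*α-1-β) := by
            apply Finset.sum_le_sum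
            intro a ha
            simp only [Finset.mem_filter, Finset.mem_univ, true_and] at ha
            rw [hB_def, Finset.filter_filter]
            apply mh_main α β hβ hβα
            · exact lt_of_lt_of_le (ZMod.val_lt _) hpα
            · exact lt_of_lt_of_le (ZMod.val_lt _) hpα
            · intro hval
              apply ha
              have := congrArg (fun n : ℕ => (n : ZMod p)) hval
              simpa [ZMod.natCast_val, ZMod.cast_id] using this
        _ ≤ p^k * 2^(2*α-1-β) := by
            rw [Finset.sum_const, smul_eq_mul]
            apply Nat.mul_le_mul_right
            calc (Finset.univ.filter _).card ≤ (Finset.univ : Finset (Fin k → ZMod p)).card :=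
                  Finset.card_le_card (Finset.filter_subset _ _)
              _ = p^k := by
                  rw [Finset.card_univ, Fintype.card_pi, Finset.prod_const, Finset.card_univ,
                    ZMod.card, Fintype.card_fin]
    exact Nat.add_le_add hbound1 hbound2
  -- cast to ℝ
  have hcast : ((((Finset.univ : Finset (Fin k → ZMod p)) ×ˢ B).filter
        (fun abc : (Fin k → ZMod p) × (ℕ × ℕ) =>
          (abc.2.1 * (∑ i, abc.1 i * x i).val + abc.2.2) % 2 ^ α / 2 ^ (α - β)
            = (abc.2.1 * (∑ i, abc.1 i * y i).val + abc.2.2) % 2 ^ α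
                / 2 ^ (α - β))).card : ℝ)
      ≤ ((p:ℝ)^(k-1) * 2^(2*α-1) + (p:ℝ)^k * 2^(2*α-1-β)) := by
    calc _ ≤ ((p^(k-1) * 2^(2*α-1) + p^k * 2^(2*α-1-β) : ℕ) : ℝ) := Nat.cast_le.mpr hnat
      _ = _ := by push_cast; ring
  exact le_trans hcast (le_of_eq (final_eq p k α β hp0 hk hβ hβα).symm)
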